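/- Let u : ℤ → ℝ → ℝ be a family of differentiable functions (write uⱼ(t) := u(n+j, t)) satisfying for every n ∈ ℤ the lattice equation u' = (u·u₁+1)(u·u₋₁+1)(u₂−u₋₂). Define w(n,t) := u(n,t)·u(n+1,t). Then w satisfies w' = (w+1)( w₂(1/w₁+1)w − w(1/w₋₁+1)w₋₂ + w₁ − w₋₁ ), wherever w₁ and w₋₁ are nonzero. -/

import Mathlib

/-- Substitution w = u·u₁ maps solutions of lattice equation (g),
u' = (u₁u+1)(uu₋₁+1)(u₂−u₋₂), to solutions of the universal equation (wt). -/
theorem stmt1 (u : ℤ → ℝ → ℝ)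
    (hu : ∀ (n : ℤ) (t : ℝ), HasDerivAt (u n)
      ((u (n + 1) t * u n t + 1) * (u n t * u (n - 1) t + 1)
        * (u (n + 2) t - u (n - 2) t)) t)
    (w : ℤ → ℝ → ℝ) (hw : ∀ (n : ℤ) (t : ℝ), w n t = u n t * u (n + 1) t)
    (n : ℤ) (t : ℝ) (h1 : w (n + 1) t ≠ 0) (hm1 : w (n - 1) t ≠ 0) :
    HasDerivAt (w n)
      ((w n t + 1) * (w (n + 2) t * (1 / w (n + 1) t + 1) * w n t
        - w n t * (1 / w (n - 1) t + 1) * w (n - 2) t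
        + w (n + 1) t - w (n - 1) t)) t := by
  have hweq : w n = fun s => u n s * u (n + 1) s := funext (hw n)
  have hd : HasDerivAt (fun s => u n s * u (n + 1) s) _ t := (hu n t).fun_mul (hu (n + 1) t)
  rw [hweq]
  convert hd using 1
  simp only [hw, show n + 1 + 1 = n + 2 by ring, show n + 1 - 1 = n by ring,
    show n + 2 + 1 = n + 3 by ring, show n - 2 + 1 = n - 1 by ring,
    show n - 1 + 1 = n + 0 by ring, show n + 0 = n by ring,
    show n + 1 + 2 = n + 3 by ring, show n + 1 - 2 = n - 1 by ring] at *
  obtain ⟨h1a, h1b⟩ := mul_ne_zero_iff.mp h1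
  obtain ⟨hm1a, hm1b⟩ := mul_ne_zero_iff.mp hm1
  field_simp at *
  ring
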